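/- Let $b, m \in \mathbb{R}$ with $m \geq 0$, let $z \sim \mathcal{N}(0,1)$, and define $w = 1/(1 + e^{bz+m})$. Then $\frac{1}{1+e^{m}} \leq \mathbb{E}[w] \leq \min\left\{\frac{1}{2}, \frac{2}{3 + e^{m - b^2/2}}\right\}$. -/

import Mathlib

open MeasureTheory ProbabilityTheory Real


-- transfer lemma
lemma gauss_repr (g : ℝ → ℝ) :
    ∫ x, g x ∂(gaussianReal 0 1) = ∫ x, gaussianPDFReal 0 1 x * g x := by
  rw [gaussianReal_of_var_ne_zero _ one_ne_zero]
  have hm : Measurable (fun x => (gaussianPDFReal 0 1 x).toNNReal) :=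
    (measurable_gaussianPDFReal 0 1).real_toNNReal
  rw [show (gaussianPDF 0 1) = (fun x => ((gaussianPDFReal 0 1 x).toNNReal : ENNReal)) from rfl]
  rw [integral_withDensity_eq_integral_smul hm g]
  congr 1; ext x
  rw [NNReal.smul_def, smul_eq_mul, Real.coe_toNNReal _ (gaussianPDFReal_nonneg _ _ _)]

lemma gauss_integrable {g : ℝ → ℝ}
    (h : Integrable (fun x => gaussianPDFReal 0 1 x * g x) volume) :
    Integrable g (gaussianReal 0 1) := by
  have hm : Measurable (fun x => (gaussianPDFReal 0 1 x).toNNReal) :=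
    (measurable_gaussianPDFReal 0 1).real_toNNReal
  rw [gaussianReal_of_var_ne_zero _ one_ne_zero]
  rw [show (gaussianPDF 0 1) = (fun x => ((gaussianPDFReal 0 1 x).toNNReal : ENNReal)) from rfl]
  rw [integrable_withDensity_iff_integrable_smul hm]
  convert h using 2 with x
  · rfl
  rw [NNReal.smul_def, smul_eq_mul, Real.coe_toNNReal _ (gaussianPDFReal_nonneg _ _ _)]

lemma pdf_exp (c x : ℝ) :
    gaussianPDFReal 0 1 x * Real.exp (c*x) = Real.exp (c^2/2) * gaussianPDFReal c 1 x := by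
  simp only [gaussianPDFReal, NNReal.coe_one, mul_one, sub_zero]
  rw [mul_assoc, ← Real.exp_add, mul_comm (Real.exp _), mul_assoc, ← Real.exp_add]
  congr 1
  rw [Real.exp_eq_exp]
  ring




lemma integral_exp_gauss (c : ℝ) :
    ∫ x, Real.exp (c*x) ∂(gaussianReal 0 1) = Real.exp (c^2/2) := by
  rw [gauss_repr]
  simp_rw [pdf_exp]
  rw [integral_const_mul, integral_gaussianPDFReal_eq_one c one_ne_zero, mul_one]

lemma integrable_exp_gauss (c : ℝ) :
    Integrable (fun x => Real.exp (c*x)) (gaussianReal 0 1) := by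
  apply gauss_integrable
  simp_rw [pdf_exp]
  exact (integrable_gaussianPDFReal c 1).const_mul _

lemma ineqA {a s u : ℝ} (ha : 1 ≤ a) (hs : 0 < s) (hu : 0 < u) (hsu : s * u = 1) :
    2/(1+a) ≤ (1+a*s)⁻¹ + (1+a*u)⁻¹ := by
  have ha0 : (0:ℝ) < a := by linarith
  have h1 : (0:ℝ) < 1+a*s := by positivity
  have h2 : (0:ℝ) < 1+a*u := by positivity
  have h3 : (0:ℝ) < 1+a := by linarith
  have hsum : s + u - 2 = (s-1)^2 * u := by linear_combination (2 - s) * hsu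
  have hsum' : 0 ≤ s + u - 2 := by rw [hsum]; positivity
  have h4 : a^2*(s*u) = a^2 := by rw [hsu, mul_one]
  have h5 : 0 ≤ a*(a-1)*(s+u-2) := by
    apply mul_nonneg (mul_nonneg ha0.le (by linarith)) hsum'
  rw [inv_eq_one_div, inv_eq_one_div, div_add_div _ _ h1.ne' h2.ne',
    div_le_div_iff₀ h3 (mul_pos h1 h2)]
  nlinarith [h4, h5]

lemma ineqB {a s u : ℝ} (ha : 1 ≤ a) (hs : 0 < s) (hu : 0 < u) (hsu : s * u = 1) :
    (1+a*s)⁻¹ + (1+a*u)⁻¹ ≤ 1 := by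
  have ha0 : (0:ℝ) < a := by linarith
  have h1 : (0:ℝ) < 1+a*s := by positivity
  have h2 : (0:ℝ) < 1+a*u := by positivity
  have h4 : a^2*(s*u) = a^2 := by rw [hsu, mul_one]
  have h6 : 1 ≤ a^2 := by nlinarith
  rw [inv_eq_one_div, inv_eq_one_div, div_add_div _ _ h1.ne' h2.ne',
    div_le_one (mul_pos h1 h2)]
  nlinarith [h4, h6]

lemma ineqC {a s u x₀ : ℝ} (ha : 1 ≤ a) (hs : 0 < s) (hu : 0 < u) (hsu : s * u = 1)
    (hx0 : 0 < x₀) :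
    (1+a*s)⁻¹ + (1+a*u)⁻¹ ≤
      4*x₀/(3*x₀+a) - 4*a*x₀/(3*x₀+a)^2 + (2*a/(3*x₀+a)^2) * (s+u) := by
  have ha0 : (0:ℝ) < a := by linarith
  have h1 : (0:ℝ) < 1+a*s := by positivity
  have h2 : (0:ℝ) < 1+a*u := by positivity
  set x : ℝ := (s+u)/2 with hx
  have hx1 : 1 ≤ x := by
    have h : s + u - 2 = (s-1)^2 * u := by linear_combination (2 - s) * hsu
    have h' : 0 ≤ s + u - 2 := by rw [h]; positivity
    simp only [hx]; linarith
  have hK : (0:ℝ) < 3*x+a := by nlinarith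
  have hK0 : (0:ℝ) < 3*x₀+a := by nlinarith
  have step1 : (1+a*s)⁻¹ + (1+a*u)⁻¹ ≤ 4*x/(3*x+a) := by
    have e1 : (1+a*s)*(1+a*u) = 1+2*a*x+a^2 := by
      simp only [hx]; linear_combination a^2*hsu
    rw [inv_eq_one_div, inv_eq_one_div, div_add_div _ _ h1.ne' h2.ne',
      div_le_div_iff₀ (mul_pos h1 h2) hK, e1]
    have e2 : 1 * (1+a*u) + (1+a*s) * 1 = 2 + 2*a*x := by simp only [hx]; ring
    rw [e2]
    nlinarith [mul_nonneg ha0.le (by nlinarith : (0:ℝ) ≤ x^2 - 1),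
      mul_nonneg (by nlinarith : (0:ℝ) ≤ a^2 - 1) (by linarith : (0:ℝ) ≤ x)]
  have step2 : 4*x/(3*x+a) ≤ 4*x₀/(3*x₀+a) + 4*a/(3*x₀+a)^2 * (x - x₀) := by
    have e : 4*x₀/(3*x₀+a) + 4*a/(3*x₀+a)^2 * (x - x₀)
        = (4*x₀*(3*x₀+a) + 4*a*(x-x₀)) / (3*x₀+a)^2 := by
      field_simp
    rw [e, div_le_div_iff₀ hK (by positivity)]
    nlinarith [mul_nonneg ha0.le (sq_nonneg (x - x₀))]
  calc (1+a*s)⁻¹ + (1+a*u)⁻¹ ≤ 4*x/(3*x+a) := step1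
    _ ≤ 4*x₀/(3*x₀+a) + 4*a/(3*x₀+a)^2 * (x - x₀) := step2
    _ = 4*x₀/(3*x₀+a) - 4*a*x₀/(3*x₀+a)^2 + (2*a/(3*x₀+a)^2) * (s+u) := by
        simp only [hx]; ring






theorem stmt0 (b m : ℝ) (hm : 0 ≤ m) :
    1 / (1 + Real.exp m) ≤
      (∫ z, (1 + Real.exp (b * z + m))⁻¹ ∂(gaussianReal 0 1)) ∧
    (∫ z, (1 + Real.exp (b * z + m))⁻¹ ∂(gaussianReal 0 1)) ≤
      min (1 / 2) (2 / (3 + Real.exp (m - b ^ 2 / 2))) := by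
  have ha : 1 ≤ Real.exp m := by
    calc (1:ℝ) = Real.exp 0 := Real.exp_zero.symm
    _ ≤ Real.exp m := Real.exp_le_exp.mpr hm
  have ha0 : (0:ℝ) < Real.exp m := Real.exp_pos m
  set μ := gaussianReal 0 1 with hμ
  have hprob : IsProbabilityMeasure μ := by rw [hμ]; infer_instance
  -- measurability and integrability of the sigmoid-type integrands
  have measF : ∀ c : ℝ, Measurable (fun z : ℝ => (1 + Real.exp (c * z + m))⁻¹) := fun c =>
    (measurable_const.add (((measurable_id.const_mul c).add_const m).exp)).inv
  have hInt : ∀ c : ℝ, Integrable (fun z : ℝ => (1 + Real.exp (c * z + m))⁻¹) μ := by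
    intro c
    refine Integrable.mono' (integrable_const 1) ((measF c).aestronglyMeasurable)
      (ae_of_all _ fun z => ?_)
    have h1 : (0:ℝ) < 1 + Real.exp (c*z+m) := by positivity
    rw [Real.norm_eq_abs, abs_of_nonneg (by positivity)]
    rw [inv_le_one₀ h1]
    nlinarith [Real.exp_pos (c*z+m)]
  have hG : Integrable (fun z : ℝ => (1 + Real.exp (-(b*z) + m))⁻¹) μ := by
    simpa [neg_mul] using hInt (-b)
  -- symmetry of the gaussian
  have hmap : μ.map (fun z : ℝ => -z) = μ := by
    have h := gaussianReal_map_const_mul (μ := 0) (v := 1) (-1)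
    have h2 : (fun z : ℝ => -z) = (((-1 : ℝ)) * ·) := by funext z; simp
    rw [hμ, h2, h]
    norm_num
  have hsym : (∫ z, (1 + Real.exp (b * z + m))⁻¹ ∂μ)
      = ∫ z, (1 + Real.exp (-(b * z) + m))⁻¹ ∂μ := by
    conv_lhs => rw [← hmap]
    rw [integral_map measurable_neg.aemeasurable (measF b).aestronglyMeasurable]
    simp_rw [mul_neg]
  set I : ℝ := ∫ z, (1 + Real.exp (b * z + m))⁻¹ ∂μ with hI
  have hsum : I + I = ∫ z, ((1 + Real.exp (b * z + m))⁻¹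
      + (1 + Real.exp (-(b * z) + m))⁻¹) ∂μ := by
    rw [integral_add (hInt b) hG, ← hsym]
  -- rewriting the integrand in (1 + a*s)⁻¹ form
  have hform : ∀ z : ℝ, (1 + Real.exp (b * z + m))⁻¹ + (1 + Real.exp (-(b * z) + m))⁻¹
      = (1 + Real.exp m * Real.exp (b*z))⁻¹ + (1 + Real.exp m * Real.exp (-(b*z)))⁻¹ := by
    intro z
    rw [Real.exp_add, Real.exp_add, mul_comm (Real.exp (b*z)), mul_comm (Real.exp (-(b*z)))]
  have hsu : ∀ z : ℝ, Real.exp (b*z) * Real.exp (-(b*z)) = 1 := by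
    intro z; rw [← Real.exp_add]; simp
  -- lower bound
  have hlb : 2/(1 + Real.exp m) ≤ I + I := by
    rw [hsum]
    have hc : 2/(1+Real.exp m) = ∫ _z, 2/(1+Real.exp m) ∂μ := by
      simp [integral_const, measure_univ]
    rw [hc]
    refine integral_mono (integrable_const _) ((hInt b).add hG) fun z => ?_
    simp only
    rw [hform z]
    exact ineqA ha (Real.exp_pos _) (Real.exp_pos _) (hsu z)
  -- upper bound 1/2
  have hub1 : I + I ≤ 1 := by
    rw [hsum]
    refine le_trans (integral_mono ((hInt b).add hG) (integrable_const 1) fun z => ?_)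
      (by simp)
    simp only [Pi.add_apply]
    rw [hform z]
    exact ineqB ha (Real.exp_pos _) (Real.exp_pos _) (hsu z)
  -- upper bound 2/(3+exp(m-b^2/2))
  set A : ℝ := Real.exp m with hA
  set X : ℝ := Real.exp (b^2/2) with hX
  have hX0 : (0:ℝ) < X := Real.exp_pos _
  have hK0 : (0:ℝ) < 3*X+A := by positivity
  have hub2 : I + I ≤ 4*X/(3*X+A) := by
    rw [hsum]
    have hint2 : Integrable (fun z : ℝ => 4*X/(3*X+A) - 4*A*X/(3*X+A)^2
        + (2*A/(3*X+A)^2) * (Real.exp (b*z) + Real.exp (-(b*z)))) μ := by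
      refine (integrable_const _).add (Integrable.const_mul ?_ _)
      have h := (integrable_exp_gauss b).add (integrable_exp_gauss (-b))
      simpa [neg_mul, Pi.add_def] using h
    have hmono := integral_mono ((hInt b).add hG) hint2 (fun z => by
      simp only [Pi.add_apply]
      rw [hform z]
      exact ineqC ha (Real.exp_pos _) (Real.exp_pos _) (hsu z) hX0)
    refine hmono.trans_eq ?_
    rw [integral_add (integrable_const _) (by
      refine Integrable.const_mul ?_ _
      have h := (integrable_exp_gauss b).add (integrable_exp_gauss (-b))
      simpa [neg_mul, Pi.add_def] using h)]
    rw [integral_const, integral_const_mul]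
    have hexps : (∫ z, (Real.exp (b*z) + Real.exp (-(b*z))) ∂μ) = X + X := by
      have h1 := integral_exp_gauss b
      have h2 := integral_exp_gauss (-b)
      rw [integral_add (integrable_exp_gauss b) (by
        have h := integrable_exp_gauss (-b); simpa [neg_mul] using h)]
      have h2' : (∫ z, Real.exp (-(b*z)) ∂μ) = X := by
        rw [show (fun z : ℝ => Real.exp (-(b*z))) = fun z : ℝ => Real.exp ((-b)*z) by
          funext z; rw [neg_mul], h2, hX]
        norm_num
      rw [h1, h2', hX]
    rw [hexps]
    simp only [measure_univ, probReal_univ, ENNReal.toReal_one, smul_eq_mul, one_mul]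
    field_simp
    ring
  have hfinal : 4*X/(3*X+A)/2 = 2 / (3 + Real.exp (m - b ^ 2 / 2)) := by
    rw [Real.exp_sub, ← hA, ← hX]
    rw [div_eq_div_iff (by positivity) (by positivity)]
    field_simp
    ring
  constructor
  · have e : 2/(1+Real.exp m) = 2*(1/(1+Real.exp m)) := by ring
    linarith
  · rw [le_min_iff]
    constructor
    · linarith
    · rw [← hfinal]; linarith
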